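/- For holomorphic functions φ₁,…,φₙ on an open set U ⊆ ℂ which is star-shaped with respect to 0, the n-fold convolution product (φ₁ * ⋯ * φₙ)(ζ) = ∫₀^ζ dζ₁ ∫₀^{ζ-ζ₁} dζ₂ ⋯ ∫₀^{ζ-(ζ₁+⋯+ζ_{n-2})} dζ_{n-1} φ₁(ζ₁)⋯φ_{n-1}(ζ_{n-1}) φₙ(ζ-(ζ₁+⋯+ζ_{n-1})) satisfies the bound |φ₁*⋯*φₙ(ζ)| ≤ (|ζ|^{n-1}/(n-1)!) · max_{[0,ζ]}|φ₁| ⋯ max_{[0,ζ]}|φₙ| for every ζ ∈ U. -/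

import Mathlib

open MeasureTheory intervalIntegral

/-- Convolution of two functions along the segment `[0, ζ]`:
`(f * g)(ζ) = ∫₀^ζ f(ζ₁) g(ζ - ζ₁) dζ₁`, parametrized by `ζ₁ = t ζ`, `t ∈ [0,1]`. -/
noncomputable def segConv (f g : ℂ → ℂ) : ℂ → ℂ :=
  fun ζ => ζ * ∫ t in (0:ℝ)..1, f ((t : ℂ) * ζ) * g (ζ - (t : ℂ) * ζ)

/-- Iterated (n+1)-fold convolution `φ₀ * φ₁ * ⋯ * φₙ`. -/
noncomputable def iterConv : (n : ℕ) → (Fin (n + 1) → ℂ → ℂ) → ℂ → ℂ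
  | 0, φ => φ 0
  | n + 1, φ => segConv (φ 0) (iterConv n (fun i => φ i.succ))

lemma iterConv_aux (ζ : ℂ) : ∀ (n : ℕ) (φ : Fin (n + 1) → ℂ → ℂ) (M : Fin (n + 1) → ℝ)
    (_hM : ∀ j, ∀ t : ℝ, t ∈ Set.Icc (0:ℝ) 1 → ‖φ j ((t : ℂ) * ζ)‖ ≤ M j),
    ∀ s : ℝ, s ∈ Set.Icc (0:ℝ) 1 →
      ‖iterConv n φ ((s : ℂ) * ζ)‖ ≤ ‖ζ‖ ^ n * s ^ n / n.factorial * ∏ j, M j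
  | 0, φ, M, hM, s, hs => by
    simpa [iterConv] using (hM 0 s hs)
  | n + 1, φ, M, hM, s, hs => by
    have hM0 : (0:ℝ) ≤ M 0 := le_trans (norm_nonneg _) (hM 0 0 (by norm_num))
    have hMprod : (0:ℝ) ≤ ∏ j, M (Fin.succ j) :=
      Finset.prod_nonneg fun j _ => le_trans (norm_nonneg _) (hM j.succ 0 (by norm_num))
    set C : ℝ := M 0 * (‖ζ‖ ^ n * s ^ n / n.factorial * ∏ j, M (Fin.succ j)) with hC
    have hCnn : 0 ≤ C := by
      refine mul_nonneg hM0 (mul_nonneg (div_nonneg (mul_nonneg (pow_nonneg (norm_nonneg _) _)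
        (pow_nonneg hs.1 _)) (Nat.cast_nonneg _)) hMprod)
    -- bound on the integrand
    have hbound : ∀ t ∈ Set.uIoc (0:ℝ) 1,
        ‖φ 0 ((t : ℂ) * ((s:ℂ) * ζ)) *
          iterConv n (fun i => φ i.succ) ((s:ℂ) * ζ - (t:ℂ) * ((s:ℂ) * ζ))‖
          ≤ C * (1 - t) ^ n := by
      intro t ht
      rw [Set.uIoc_of_le (by norm_num : (0:ℝ) ≤ 1)] at ht
      have ht0 : 0 ≤ t := le_of_lt ht.1
      have ht1 : t ≤ 1 := ht.2
      have h1 : ((t:ℂ) * ((s:ℂ) * ζ)) = (((t*s : ℝ)) : ℂ) * ζ := by push_cast; ring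
      have h2 : (s:ℂ) * ζ - (t:ℂ) * ((s:ℂ) * ζ) = ((((1-t)*s : ℝ)) : ℂ) * ζ := by
        push_cast; ring
      rw [h2, h1, norm_mul]
      have hts : t * s ∈ Set.Icc (0:ℝ) 1 := by
        constructor
        · exact mul_nonneg ht0 hs.1
        · calc t * s ≤ 1 * 1 := by
                apply mul_le_mul ht1 hs.2 hs.1 zero_le_one
          _ = 1 := by ring
      have h1ts : (1 - t) * s ∈ Set.Icc (0:ℝ) 1 := by
        constructor
        · exact mul_nonneg (by linarith) hs.1
        · calc (1 - t) * s ≤ 1 * 1 := by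
                apply mul_le_mul (by linarith) hs.2 hs.1 zero_le_one
          _ = 1 := by ring
      have ih := iterConv_aux ζ n (fun i => φ i.succ) (fun i => M i.succ)
        (fun j t ht => hM j.succ t ht) ((1 - t) * s) h1ts
      calc ‖φ 0 ((((t*s : ℝ)) : ℂ) * ζ)‖ * ‖iterConv n (fun i => φ i.succ) (((((1-t)*s : ℝ)) : ℂ) * ζ)‖
          ≤ M 0 * (‖ζ‖ ^ n * ((1 - t) * s) ^ n / n.factorial * ∏ j, M (Fin.succ j)) := by
            apply mul_le_mul (hM 0 (t*s) hts) ih (norm_nonneg _) hM0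
        _ = C * (1 - t) ^ n := by rw [hC, mul_pow]; ring
    have hgint : IntervalIntegrable (fun t : ℝ => C * (1 - t) ^ n) volume 0 1 :=
      (Continuous.intervalIntegrable (by continuity) 0 1)
    have hg : (∫ t in (0:ℝ)..1, C * (1 - t) ^ n) = C / (n + 1) := by
      rw [intervalIntegral.integral_const_mul]
      have : (∫ t in (0:ℝ)..1, (1 - t) ^ n) = ∫ t in (0:ℝ)..1, t ^ n := by
        have := intervalIntegral.integral_comp_sub_left (a := (0:ℝ)) (b := 1)
          (fun x : ℝ => x ^ n) 1
        simpa using this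
      rw [this, integral_pow]
      field_simp
      simp
    have key : ‖∫ t in (0:ℝ)..1, φ 0 ((t : ℂ) * ((s:ℂ) * ζ)) *
        iterConv n (fun i => φ i.succ) ((s:ℂ) * ζ - (t:ℂ) * ((s:ℂ) * ζ))‖ ≤ C / (n + 1) := by
      have := intervalIntegral.norm_integral_le_abs_of_norm_le
        (μ := volume) (a := (0:ℝ)) (b := 1)
        (f := fun t : ℝ => φ 0 ((t : ℂ) * ((s:ℂ) * ζ)) *
          iterConv n (fun i => φ i.succ) ((s:ℂ) * ζ - (t:ℂ) * ((s:ℂ) * ζ)))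
        (g := fun t : ℝ => C * (1 - t) ^ n)
        (ae_restrict_of_forall_mem measurableSet_uIoc hbound) hgint
      rw [hg] at this
      refine this.trans ?_
      rw [abs_of_nonneg (by positivity)]
    have hnorm : ‖iterConv (n+1) φ ((s:ℂ) * ζ)‖ ≤ ‖(s:ℂ) * ζ‖ * (C / (n + 1)) := by
      show ‖segConv (φ 0) (iterConv n (fun i => φ i.succ)) ((s:ℂ) * ζ)‖ ≤ _
      rw [segConv, norm_mul]
      exact mul_le_mul_of_nonneg_left key (norm_nonneg _)
    refine hnorm.trans ?_
    have hsnorm : ‖(s:ℂ) * ζ‖ = s * ‖ζ‖ := by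
      rw [norm_mul, Complex.norm_real, Real.norm_of_nonneg hs.1]
    rw [hsnorm, hC]
    rw [Nat.factorial_succ]
    have hzn : (0:ℝ) ≤ ‖ζ‖ := norm_nonneg _
    have hfac : (0:ℝ) < (n.factorial : ℝ) := by exact_mod_cast n.factorial_pos
    have hprodsucc : (∏ j, M j) = M 0 * ∏ j, M (Fin.succ j) := Fin.prod_univ_succ M
    rw [hprodsucc]
    push_cast
    apply le_of_eq
    field_simp
    ring

/-- Bound for the n-fold convolution product of holomorphic functions on a star-shaped
open set `U`: `|φ₁*⋯*φₙ(ζ)| ≤ |ζ|^{n-1}/(n-1)! ⋅ ∏ max_{[0,ζ]}|φⱼ|`. -/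
theorem convolution_bound_starshaped (U : Set ℂ) (hU : IsOpen U)
    (hstar : ∀ ζ ∈ U, ∀ t : ℝ, t ∈ Set.Icc (0:ℝ) 1 → (t : ℂ) * ζ ∈ U)
    (n : ℕ) (φ : Fin (n + 1) → ℂ → ℂ)
    (hφ : ∀ j, DifferentiableOn ℂ (φ j) U)
    (ζ : ℂ) (hζ : ζ ∈ U) (M : Fin (n + 1) → ℝ)
    (hM : ∀ j, ∀ t : ℝ, t ∈ Set.Icc (0:ℝ) 1 → ‖φ j ((t : ℂ) * ζ)‖ ≤ M j) :
    ‖iterConv n φ ζ‖ ≤ ‖ζ‖ ^ n / n.factorial * ∏ j, M j := by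
  have := iterConv_aux ζ n φ M hM 1 (by norm_num)
  simpa using this
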